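/- arXiv:1710.01374 — 2 statements merged into one kernel-verified Lean document; each statement's English description precedes it below -/
import Mathlib

section
/- Let χ : [n] → {•, ∘} with χ(1) = χ(n) = ∘ and χ^{-1}(∘) = {1 = l0 < l1 < ... < lm = n}. The map α sending π ∈ INC(χ) to the tuple (π|_{[l0,l1]}, π|_{[l1,l2]}, ..., π|_{[l_{m-1},l_m]}) of restrictions to consecutive ∘-intervals is an isomorphism of partially ordered sets from INC(χ) onto the product NC([l0,l1]) × NC([l1,l2]) × ... × NC([l_{m-1},l_m]). -/
open scoped Classical

section Defs

variable {α : Type*}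

/-- `P` is a partition of the finite set `S`: blocks are nonempty subsets of `S`
and every element of `S` lies in a unique block. -/
def IsPartitionOn (S : Finset α) (P : Finset (Finset α)) : Prop :=
  (∀ B ∈ P, B.Nonempty ∧ B ⊆ S) ∧ ∀ x ∈ S, ∃! B, B ∈ P ∧ x ∈ B

/-- `P` is noncrossing: no `s₁ < r₁ < s₂ < r₂` with `s₁, s₂` in one block and
`r₁, r₂` in a different block. -/
def Noncrossing [LinearOrder α] (P : Finset (Finset α)) : Prop :=
  ∀ V ∈ P, ∀ W ∈ P, V ≠ W →
    ¬ ∃ s₁ r₁ s₂ r₂, s₁ ∈ V ∧ s₂ ∈ V ∧ r₁ ∈ W ∧ r₂ ∈ W ∧ s₁ < r₁ ∧ r₁ < s₂ ∧ s₂ < r₂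

/-- A block `V` is inner if some other block `W` has elements `s, t` with
`s < v < t` for all `v ∈ V`. -/
def IsInnerBlock [LinearOrder α] (P : Finset (Finset α)) (V : Finset α) : Prop :=
  ∃ W ∈ P, W ≠ V ∧ ∃ s ∈ W, ∃ t ∈ W, ∀ v ∈ V, s < v ∧ v < t

/-- `P` is an interval partition: no `s₁ < r < s₂` with `s₁, s₂` in one block
and `r` in a different block. -/
def IsIntervalPartition [LinearOrder α] (P : Finset (Finset α)) : Prop :=
  ∀ V ∈ P, ∀ W ∈ P, V ≠ W →
    ¬ ∃ s₁ r s₂, s₁ ∈ V ∧ s₂ ∈ V ∧ r ∈ W ∧ s₁ < r ∧ r < s₂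

/-- Reversed refinement order: every block of `P` is contained in a block of `Q`. -/
def Refines (P Q : Finset (Finset α)) : Prop := ∀ B ∈ P, ∃ C ∈ Q, B ⊆ C

/-- Noncrossing partition of the finite ordered set `S`. -/
def NCOn [LinearOrder α] (S : Finset α) (P : Finset (Finset α)) : Prop :=
  IsPartitionOn S P ∧ Noncrossing P

/-- Interval-noncrossing partition of `S` w.r.t. the coloring `χ`
(`χ k = true` means `k` is colored `∘`): a noncrossing partition such that
no `∘`-colored element lies in an inner block. -/
def INCOn [LinearOrder α] (S : Finset α) (χ : α → Bool) (P : Finset (Finset α)) : Prop :=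
  IsPartitionOn S P ∧ Noncrossing P ∧
    ∀ V ∈ P, IsInnerBlock P V → ∀ k ∈ V, χ k = false

/-- Restriction of a partition to a subset: nonempty intersections of blocks with `A`. -/
def restrictPart [DecidableEq α] (P : Finset (Finset α)) (A : Finset α) : Finset (Finset α) :=
  (P.image (· ∩ A)).filter (·.Nonempty)

end Defs

section Helpers

variable {α : Type*}

lemma block_eq {S : Finset α} {P : Finset (Finset α)} (hP : IsPartitionOn S P)
    {B C : Finset α} {x : α} (hB : B ∈ P) (hC : C ∈ P) (hxB : x ∈ B) (hxC : x ∈ C) : B = C := by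
  have hxS : x ∈ S := (hP.1 B hB).2 hxB
  obtain ⟨D, _, huniq⟩ := hP.2 x hxS
  exact (huniq B ⟨hB, hxB⟩).trans (huniq C ⟨hC, hxC⟩).symm

lemma mem_restrict [DecidableEq α] {P : Finset (Finset α)} {A D : Finset α} :
    D ∈ restrictPart P A ↔ (∃ B ∈ P, B ∩ A = D) ∧ D.Nonempty := by
  simp [restrictPart]

lemma restrict_isPartitionOn [DecidableEq α] {S A : Finset α} {P : Finset (Finset α)}
    (hP : IsPartitionOn S P) (hA : A ⊆ S) : IsPartitionOn A (restrictPart P A) := by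
  constructor
  · intro D hD
    obtain ⟨⟨B, hB, rfl⟩, hne⟩ := mem_restrict.1 hD
    exact ⟨hne, Finset.inter_subset_right⟩
  · intro x hx
    obtain ⟨B, ⟨hB, hxB⟩, _⟩ := hP.2 x (hA hx)
    refine ⟨B ∩ A, ⟨mem_restrict.2 ⟨⟨B, hB, rfl⟩, ⟨x, Finset.mem_inter.2 ⟨hxB, hx⟩⟩⟩,
      Finset.mem_inter.2 ⟨hxB, hx⟩⟩, ?_⟩
    rintro D ⟨hD, hxD⟩
    obtain ⟨⟨C, hC, rfl⟩, _⟩ := mem_restrict.1 hD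
    rw [block_eq hP hC hB (Finset.mem_inter.1 hxD).1 hxB]

lemma restrict_noncrossing [DecidableEq α] [LinearOrder α] {A : Finset α}
    {P : Finset (Finset α)} (hP : Noncrossing P) : Noncrossing (restrictPart P A) := by
  rintro V hV W hW hVW ⟨s₁, r₁, s₂, r₂, hs₁, hs₂, hr₁, hr₂, h₁, h₂, h₃⟩
  obtain ⟨⟨B, hB, rfl⟩, _⟩ := mem_restrict.1 hV
  obtain ⟨⟨C, hC, rfl⟩, _⟩ := mem_restrict.1 hW
  have hBC : B ≠ C := fun h => hVW (by rw [h])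
  exact hP B hB C hC hBC ⟨s₁, r₁, s₂, r₂, (Finset.mem_inter.1 hs₁).1, (Finset.mem_inter.1 hs₂).1,
    (Finset.mem_inter.1 hr₁).1, (Finset.mem_inter.1 hr₂).1, h₁, h₂, h₃⟩

lemma refines_antisymm {S : Finset α} {P Q : Finset (Finset α)}
    (hP : IsPartitionOn S P) (hQ : IsPartitionOn S Q)
    (h1 : Refines P Q) (h2 : Refines Q P) : P = Q := by
  have key : ∀ (P' Q' : Finset (Finset α)), IsPartitionOn S P' → IsPartitionOn S Q' →
      Refines P' Q' → Refines Q' P' → ∀ B ∈ P', B ∈ Q' := by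
    intro P' Q' hP' hQ' h1' h2' B hB
    obtain ⟨C, hC, hBC⟩ := h1' B hB
    obtain ⟨B', hB', hCB'⟩ := h2' C hC
    obtain ⟨x, hx⟩ := (hP'.1 B hB).1
    have hBB' : B = B' := block_eq hP' hB hB' hx (hCB' (hBC hx))
    have : B = C := Finset.Subset.antisymm hBC (hBB' ▸ hCB')
    exact this ▸ hC
  exact Finset.Subset.antisymm (fun B hB => key P Q hP hQ h1 h2 B hB)
    (fun B hB => key Q P hQ hP h2 h1 B hB)

end Helpers

/-- the map π ↦ (π|_[l₀,l₁], ..., π|_[l_{m-1},l_m]) is a poset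
isomorphism from INC(χ) onto the product NC([l₀,l₁]) × ⋯ × NC([l_{m-1},l_m]). -/
theorem INC_orderIso_prod_NC {n m : ℕ} (hn : 0 < n) (χ : Fin n → Bool)
    (l : Fin (m + 1) → Fin n) (hmono : StrictMono l)
    (h0 : l 0 = ⟨0, hn⟩) (hlast : l (Fin.last m) = ⟨n - 1, Nat.sub_lt hn one_pos⟩)
    (hcirc : ∀ k : Fin n, χ k = true ↔ ∃ i, l i = k) :
    -- well defined into the product of the NC([l_{i-1}, l_i])
    (∀ π : Finset (Finset (Fin n)), INCOn Finset.univ χ π → ∀ i : Fin m,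
      NCOn (Finset.Icc (l i.castSucc) (l i.succ))
        (restrictPart π (Finset.Icc (l i.castSucc) (l i.succ)))) ∧
    -- injectivity
    (∀ π₁ π₂ : Finset (Finset (Fin n)), INCOn Finset.univ χ π₁ → INCOn Finset.univ χ π₂ →
      (∀ i : Fin m,
        restrictPart π₁ (Finset.Icc (l i.castSucc) (l i.succ)) =
        restrictPart π₂ (Finset.Icc (l i.castSucc) (l i.succ))) → π₁ = π₂) ∧
    -- surjectivity
    (∀ f : Fin m → Finset (Finset (Fin n)),
      (∀ i : Fin m, NCOn (Finset.Icc (l i.castSucc) (l i.succ)) (f i)) →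
      ∃ π : Finset (Finset (Fin n)), INCOn Finset.univ χ π ∧
        ∀ i : Fin m, restrictPart π (Finset.Icc (l i.castSucc) (l i.succ)) = f i) ∧
    -- order isomorphism (both directions)
    (∀ π₁ π₂ : Finset (Finset (Fin n)), INCOn Finset.univ χ π₁ → INCOn Finset.univ χ π₂ →
      (Refines π₁ π₂ ↔ ∀ i : Fin m,
        Refines (restrictPart π₁ (Finset.Icc (l i.castSucc) (l i.succ)))
                (restrictPart π₂ (Finset.Icc (l i.castSucc) (l i.succ))))) := by
  -- basic facts
  have hllast : ∀ x : Fin n, x ≤ l (Fin.last m) := by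
    intro x
    rw [hlast, Fin.le_def]
    have := x.isLt
    simp
    omega
  -- the boundary lemma: a block containing points on both sides of a circ point contains it
  have boundary : ∀ π : Finset (Finset (Fin n)), INCOn Finset.univ χ π → ∀ B ∈ π,
      ∀ x ∈ B, ∀ y ∈ B, ∀ i : Fin (m+1), x < l i → l i < y → l i ∈ B := by
    intro π hπ B hB x hx y hy i hxi hiy
    obtain ⟨W, ⟨hW, hpW⟩, _⟩ := hπ.1.2 (l i) (Finset.mem_univ _)
    by_cases hWB : W = B
    · exact hWB ▸ hpW
    · exfalso
      have hall : ∀ w ∈ W, x < w ∧ w < y := by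
        intro w hw
        constructor
        · by_contra hle
          push_neg at hle
          have hwx : w < x := lt_of_le_of_ne hle
            (fun h => hWB (block_eq hπ.1 hW hB (h ▸ hw) hx))
          exact hπ.2.1 W hW B hB hWB ⟨w, x, l i, y, hw, hpW, hx, hy, hwx, hxi, hiy⟩
        · by_contra hle
          push_neg at hle
          have hyw : y < w := lt_of_le_of_ne hle
            (fun h => hWB (block_eq hπ.1 hW hB (h.symm ▸ hw) hy))
          exact hπ.2.1 B hB W hW (fun h => hWB h.symm)
            ⟨x, l i, y, w, hx, hy, hpW, hw, hxi, hiy, hyw⟩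
      have hinner : IsInnerBlock π W := ⟨B, hB, fun h => hWB h.symm, x, hx, y, hy, hall⟩
      have hfalse := hπ.2.2 W hW hinner (l i) hpW
      have htrue : χ (l i) = true := (hcirc (l i)).2 ⟨i, rfl⟩
      rw [htrue] at hfalse
      exact absurd hfalse (by simp)
  -- finding the interval containing a point
  have find : ∀ x : Fin n, x < l (Fin.last m) →
      ∃ i : Fin m, l i.castSucc ≤ x ∧ x < l i.succ := by
    intro x hx
    classical
    set T := Finset.univ.filter (fun k : Fin (m+1) => l k ≤ x) with hT
    have h0T : (0 : Fin (m+1)) ∈ T := by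
      simp only [hT, Finset.mem_filter, Finset.mem_univ, true_and]
      rw [h0, Fin.le_def]
      simp
    have hTne : T.Nonempty := ⟨0, h0T⟩
    set k := T.max' hTne with hk
    have hkT : k ∈ T := T.max'_mem hTne
    have hklx : l k ≤ x := (Finset.mem_filter.1 hkT).2
    have hklt : (k : ℕ) < m := by
      have h1 := k.isLt
      have h2 : (k : ℕ) ≠ m := by
        intro h
        have : k = Fin.last m := Fin.ext h
        rw [this] at hklx
        exact absurd hx (not_lt.2 hklx)
      omega
    refine ⟨⟨(k : ℕ), hklt⟩, ?_, ?_⟩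
    · have : (Fin.castSucc ⟨(k : ℕ), hklt⟩ : Fin (m+1)) = k := Fin.ext rfl
      rw [this]
      exact hklx
    · by_contra hle
      push_neg at hle
      have hmem : (Fin.succ ⟨(k : ℕ), hklt⟩ : Fin (m+1)) ∈ T := by
        simp only [hT, Finset.mem_filter, Finset.mem_univ, true_and]
        exact hle
      have hle2 := T.le_max' _ hmem
      rw [← hk] at hle2
      rw [Fin.le_def] at hle2
      simp at hle2
  -- walking lemma
  have walk_le : ∀ d : ℕ, ∀ π₁ π₂ : Finset (Finset (Fin n)), INCOn Finset.univ χ π₁ →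
      IsPartitionOn Finset.univ π₂ →
      (∀ i : Fin m, Refines (restrictPart π₁ (Finset.Icc (l i.castSucc) (l i.succ)))
          (restrictPart π₂ (Finset.Icc (l i.castSucc) (l i.succ)))) →
      ∀ x y : Fin n, x ≤ y → (y : ℕ) - (x : ℕ) ≤ d → ∀ B ∈ π₁, x ∈ B → y ∈ B →
      ∀ C ∈ π₂, x ∈ C → y ∈ C := by
    intro d
    induction d with
    | zero =>
      intro π₁ π₂ _ _ _ x y hxy hd B hB hxB hyB C hC hxC
      have : x = y := by
        rw [Fin.le_def] at hxy
        exact Fin.ext (by omega)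
      exact this ▸ hxC
    | succ d ih =>
      intro π₁ π₂ hπ₁ hπ₂ href x y hxy hd B hB hxB hyB C hC hxC
      rcases eq_or_lt_of_le hxy with rfl | hlt
      · exact hxC
      · obtain ⟨i, hix, hxi⟩ := find x (lt_of_lt_of_le hlt (hllast y))
        set A := Finset.Icc (l i.castSucc) (l i.succ) with hA
        have hxA : x ∈ A := Finset.mem_Icc.2 ⟨hix, le_of_lt hxi⟩
        have hBA : B ∩ A ∈ restrictPart π₁ A :=
          mem_restrict.2 ⟨⟨B, hB, rfl⟩, ⟨x, Finset.mem_inter.2 ⟨hxB, hxA⟩⟩⟩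
        obtain ⟨D, hD, hsub⟩ := href i (B ∩ A) hBA
        obtain ⟨⟨C₂, hC₂, rfl⟩, _⟩ := mem_restrict.1 hD
        have hxC₂ : x ∈ C₂ :=
          (Finset.mem_inter.1 (hsub (Finset.mem_inter.2 ⟨hxB, hxA⟩))).1
        have hC₂C : C₂ = C := block_eq hπ₂ hC₂ hC hxC₂ hxC
        by_cases hy2 : y ≤ l i.succ
        · have hyA : y ∈ A := Finset.mem_Icc.2 ⟨le_trans hix (le_of_lt hlt), hy2⟩
          have : y ∈ C₂ :=
            (Finset.mem_inter.1 (hsub (Finset.mem_inter.2 ⟨hyB, hyA⟩))).1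
          exact hC₂C ▸ this
        · push_neg at hy2
          have hp : l i.succ ∈ B := boundary π₁ hπ₁ B hB x hxB y hyB i.succ hxi hy2
          have hpA : l i.succ ∈ A := Finset.mem_Icc.2
            ⟨le_of_lt (hmono (Fin.castSucc_lt_succ (i := i))), le_refl _⟩
          have hpC₂ : l i.succ ∈ C₂ :=
            (Finset.mem_inter.1 (hsub (Finset.mem_inter.2 ⟨hp, hpA⟩))).1
          have harith : (y : ℕ) - ((l i.succ : Fin n) : ℕ) ≤ d := by
            rw [Fin.lt_def] at hxi
            omega
          exact ih π₁ π₂ hπ₁ hπ₂ href (l i.succ) y (le_of_lt hy2) harith B hB hp hyB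
            C hC (hC₂C ▸ hpC₂)
  -- backward direction of the order iso
  have backward : ∀ π₁ π₂ : Finset (Finset (Fin n)), INCOn Finset.univ χ π₁ →
      INCOn Finset.univ χ π₂ →
      (∀ i : Fin m, Refines (restrictPart π₁ (Finset.Icc (l i.castSucc) (l i.succ)))
          (restrictPart π₂ (Finset.Icc (l i.castSucc) (l i.succ)))) →
      Refines π₁ π₂ := by
    intro π₁ π₂ h₁ h₂ href B hB
    obtain ⟨x, hx⟩ := (h₁.1.1 B hB).1
    obtain ⟨C, ⟨hC, hxC⟩, _⟩ := h₂.1.2 x (Finset.mem_univ x)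
    refine ⟨C, hC, fun y hy => ?_⟩
    rcases le_total x y with hxy | hyx
    · exact walk_le n π₁ π₂ h₁ h₂.1 href x y hxy (by omega) B hB hx hy C hC hxC
    · obtain ⟨C', ⟨hC', hyC'⟩, _⟩ := h₂.1.2 y (Finset.mem_univ y)
      have hx' : x ∈ C' := walk_le n π₁ π₂ h₁ h₂.1 href y x hyx (by omega) B hB hy hx C' hC' hyC'
      rwa [block_eq h₂.1 hC hC' hxC hx']
  -- forward direction of the order iso
  have forward : ∀ π₁ π₂ : Finset (Finset (Fin n)), Refines π₁ π₂ → ∀ A : Finset (Fin n),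
      Refines (restrictPart π₁ A) (restrictPart π₂ A) := by
    intro π₁ π₂ h A D hD
    obtain ⟨⟨B, hB, rfl⟩, hne⟩ := mem_restrict.1 hD
    obtain ⟨C, hC, hBC⟩ := h B hB
    have hsub : B ∩ A ⊆ C ∩ A := Finset.inter_subset_inter hBC (Finset.Subset.refl A)
    exact ⟨C ∩ A, mem_restrict.2 ⟨⟨C, hC, rfl⟩, hne.mono hsub⟩, hsub⟩
  refine ⟨?_, ?_, ?_, ?_⟩
  · -- part 1
    intro π hπ i
    exact ⟨restrict_isPartitionOn hπ.1 (Finset.subset_univ _), restrict_noncrossing hπ.2.1⟩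
  · -- injectivity
    intro π₁ π₂ h₁ h₂ heq
    refine refines_antisymm h₁.1 h₂.1 ?_ ?_
    · refine backward π₁ π₂ h₁ h₂ (fun i => ?_)
      rw [heq i]
      exact fun B hB => ⟨B, hB, Finset.Subset.refl B⟩
    · refine backward π₂ π₁ h₂ h₁ (fun i => ?_)
      rw [heq i]
      exact fun B hB => ⟨B, hB, Finset.Subset.refl B⟩
  · -- surjectivity
    intro f hf
    have main : ∀ jj : Fin (m+1), ∃ π : Finset (Finset (Fin n)),
        IsPartitionOn (Finset.Icc (l 0) (l jj)) π ∧ Noncrossing π ∧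
        (∀ V ∈ π, IsInnerBlock π V → ∀ k : Fin (m+1), l k ∉ V) ∧
        (∀ i : Fin m, i.succ ≤ jj →
          restrictPart π (Finset.Icc (l i.castSucc) (l i.succ)) = f i) := by
      intro jj
      induction jj using Fin.induction with
      | zero =>
        refine ⟨{{l 0}}, ?_, ?_, ?_, ?_⟩
        · rw [Finset.Icc_self]
          constructor
          · intro B hB
            rw [Finset.mem_singleton] at hB
            subst hB
            exact ⟨⟨l 0, Finset.mem_singleton_self _⟩, Finset.Subset.refl _⟩
          · intro x hx
            refine ⟨{l 0}, ⟨Finset.mem_singleton_self _, hx⟩, ?_⟩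
            rintro B ⟨hB, _⟩
            exact Finset.mem_singleton.1 hB
        · intro V hV W hW hVW
          rw [Finset.mem_singleton] at hV hW
          exact absurd (hV.trans hW.symm) hVW
        · rintro V hV ⟨W, hW, hWV, _⟩ k hk
          rw [Finset.mem_singleton] at hV hW
          exact hWV (hW.trans hV.symm)
        · intro i hi
          exfalso
          rw [Fin.le_def] at hi
          simp [Fin.val_succ] at hi
      | succ jf ih =>
        obtain ⟨π, hpart, hnc, hinner, hres⟩ := ih
        have hfj := hf jf
        have hple : l 0 ≤ l jf.castSucc := hmono.monotone (Fin.zero_le _)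
        have hpltq : l jf.castSucc < l jf.succ := hmono (Fin.castSucc_lt_succ (i := jf))
        obtain ⟨Bp, ⟨hBp, hpBp⟩, _⟩ := hpart.2 (l jf.castSucc)
          (Finset.mem_Icc.2 ⟨hple, le_refl _⟩)
        obtain ⟨Cp, ⟨hCp, hpCp⟩, _⟩ := hfj.1.2 (l jf.castSucc)
          (Finset.mem_Icc.2 ⟨le_refl _, le_of_lt hpltq⟩)
        have hBle : ∀ B ∈ π, ∀ x ∈ B, l 0 ≤ x ∧ x ≤ l jf.castSucc := fun B hB x hx =>
          Finset.mem_Icc.1 ((hpart.1 B hB).2 hx)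
        have hCge : ∀ C ∈ f jf, ∀ x ∈ C, l jf.castSucc ≤ x ∧ x ≤ l jf.succ := fun C hC x hx =>
          Finset.mem_Icc.1 ((hfj.1.1 C hC).2 hx)
        have hnotpB : ∀ B ∈ π, B ≠ Bp → l jf.castSucc ∉ B := fun B hB hne hp' =>
          hne (block_eq hpart hB hBp hp' hpBp)
        have hnotpC : ∀ C ∈ f jf, C ≠ Cp → l jf.castSucc ∉ C := fun C hC hne hp' =>
          hne (block_eq hfj.1 hC hCp hp' hpCp)
        have hBlt : ∀ B ∈ π, B ≠ Bp → ∀ x ∈ B, x < l jf.castSucc := by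
          intro B hB hne x hx
          refine lt_of_le_of_ne (hBle B hB x hx).2 (fun h => ?_)
          rw [h] at hx
          exact hnotpB B hB hne hx
        have hCgt : ∀ C ∈ f jf, C ≠ Cp → ∀ x ∈ C, l jf.castSucc < x := by
          intro C hC hne x hx
          refine lt_of_le_of_ne (hCge C hC x hx).1 (fun h => ?_)
          rw [← h] at hx
          exact hnotpC C hC hne hx
        set M := Bp ∪ Cp with hMdef
        set π' : Finset (Finset (Fin n)) := insert M ((π.erase Bp) ∪ ((f jf).erase Cp))
          with hπ'def
        have hmem' : ∀ D, D ∈ π' ↔ D = M ∨ (D ∈ π ∧ D ≠ Bp) ∨ (D ∈ f jf ∧ D ≠ Cp) := by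
          intro D
          simp only [hπ'def, Finset.mem_insert, Finset.mem_union, Finset.mem_erase]
          tauto
        have hMmem : M ∈ π' := (hmem' M).2 (Or.inl rfl)
        have hpM : l jf.castSucc ∈ M := Finset.mem_union_left _ hpBp
        have hMlt : ∀ x ∈ M, x < l jf.castSucc → x ∈ Bp := by
          intro x hx hlt
          rcases Finset.mem_union.1 hx with h | h
          · exact h
          · exact absurd (hCge Cp hCp x h).1 (not_le.2 hlt)
        have hMgt : ∀ x ∈ M, l jf.castSucc < x → x ∈ Cp := by
          intro x hx hlt
          rcases Finset.mem_union.1 hx with h | h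
          · exact absurd (hBle Bp hBp x h).2 (not_le.2 hlt)
          · exact h
        have huniq : ∀ D₁ ∈ π', ∀ D₂ ∈ π', ∀ x : Fin n, x ∈ D₁ → x ∈ D₂ → D₁ = D₂ := by
          have hkeyM : ∀ D ∈ π', ∀ x : Fin n, x ∈ D → x ∈ M → D = M := by
            intro D hD x hxD hxM
            rcases (hmem' D).1 hD with rfl | ⟨hD', hne⟩ | ⟨hD', hne⟩
            · rfl
            · exfalso
              have hlt := hBlt D hD' hne x hxD
              exact hne (block_eq hpart hD' hBp hxD (hMlt x hxM hlt))
            · exfalso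
              have hgt := hCgt D hD' hne x hxD
              exact hne (block_eq hfj.1 hD' hCp hxD (hMgt x hxM hgt))
          intro D₁ h₁ D₂ h₂ x hx₁ hx₂
          rcases (hmem' D₁).1 h₁ with rfl | ⟨hD₁, hne₁⟩ | ⟨hD₁, hne₁⟩
          · exact (hkeyM D₂ h₂ x hx₂ hx₁).symm
          · rcases (hmem' D₂).1 h₂ with rfl | ⟨hD₂, hne₂⟩ | ⟨hD₂, hne₂⟩
            · exact hkeyM D₁ h₁ x hx₁ hx₂
            · exact block_eq hpart hD₁ hD₂ hx₁ hx₂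
            · exact absurd ((hCgt D₂ hD₂ hne₂ x hx₂).trans (hBlt D₁ hD₁ hne₁ x hx₁))
                (lt_irrefl _)
          · rcases (hmem' D₂).1 h₂ with rfl | ⟨hD₂, hne₂⟩ | ⟨hD₂, hne₂⟩
            · exact hkeyM D₁ h₁ x hx₁ hx₂
            · exact absurd ((hCgt D₁ hD₁ hne₁ x hx₁).trans (hBlt D₂ hD₂ hne₂ x hx₂))
                (lt_irrefl _)
            · exact block_eq hfj.1 hD₁ hD₂ hx₁ hx₂
        have hpart' : IsPartitionOn (Finset.Icc (l 0) (l jf.succ)) π' := by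
          constructor
          · intro D hD
            rcases (hmem' D).1 hD with rfl | ⟨hD', hne⟩ | ⟨hD', hne⟩
            · refine ⟨⟨l jf.castSucc, hpM⟩, ?_⟩
              intro x hx
              rcases Finset.mem_union.1 hx with h | h
              · exact Finset.mem_Icc.2 ⟨(hBle _ hBp x h).1,
                  le_trans (hBle _ hBp x h).2 (le_of_lt hpltq)⟩
              · exact Finset.mem_Icc.2 ⟨le_trans hple (hCge _ hCp x h).1, (hCge _ hCp x h).2⟩
            · exact ⟨(hpart.1 D hD').1, fun x hx => Finset.mem_Icc.2
                ⟨(hBle D hD' x hx).1, le_trans (hBle D hD' x hx).2 (le_of_lt hpltq)⟩⟩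
            · exact ⟨(hfj.1.1 D hD').1, fun x hx => Finset.mem_Icc.2
                ⟨le_trans hple (hCge D hD' x hx).1, (hCge D hD' x hx).2⟩⟩
          · intro x hx
            rw [Finset.mem_Icc] at hx
            rcases le_total x (l jf.castSucc) with hxp | hpx
            · obtain ⟨B, ⟨hB, hxB⟩, _⟩ := hpart.2 x (Finset.mem_Icc.2 ⟨hx.1, hxp⟩)
              by_cases hBBp : B = Bp
              · subst hBBp
                have hxM : x ∈ M := Finset.mem_union_left _ hxB
                exact ⟨M, ⟨hMmem, hxM⟩, fun D hD => huniq D hD.1 M hMmem x hD.2 hxM⟩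
              · have hBmem : B ∈ π' := (hmem' B).2 (Or.inr (Or.inl ⟨hB, hBBp⟩))
                exact ⟨B, ⟨hBmem, hxB⟩, fun D hD => huniq D hD.1 B hBmem x hD.2 hxB⟩
            · obtain ⟨C, ⟨hC, hxC⟩, _⟩ := hfj.1.2 x (Finset.mem_Icc.2 ⟨hpx, hx.2⟩)
              by_cases hCCp : C = Cp
              · subst hCCp
                have hxM : x ∈ M := Finset.mem_union_right _ hxC
                exact ⟨M, ⟨hMmem, hxM⟩, fun D hD => huniq D hD.1 M hMmem x hD.2 hxM⟩
              · have hCmem : C ∈ π' := (hmem' C).2 (Or.inr (Or.inr ⟨hC, hCCp⟩))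
                exact ⟨C, ⟨hCmem, hxC⟩, fun D hD => huniq D hD.1 C hCmem x hD.2 hxC⟩
        have hnc' : Noncrossing π' := by
          rintro V hV W hW hVW ⟨s₁, r₁, s₂, r₂, hs₁, hs₂, hr₁, hr₂, o₁, o₂, o₃⟩
          rcases (hmem' V).1 hV with rfl | ⟨hVp, hVne⟩ | ⟨hVf, hVne⟩ <;>
            rcases (hmem' W).1 hW with rfl | ⟨hWp, hWne⟩ | ⟨hWf, hWne⟩
          · exact hVW rfl
          · -- V = M, W ∈ π
            have hr₂p := hBlt W hWp hWne r₂ hr₂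
            have hs₂Bp := hMlt s₂ hs₂ (o₃.trans hr₂p)
            have hs₁Bp := hMlt s₁ hs₁ (o₁.trans (o₂.trans (o₃.trans hr₂p)))
            exact hnc Bp hBp W hWp hWne.symm ⟨s₁, r₁, s₂, r₂, hs₁Bp, hs₂Bp, hr₁, hr₂, o₁, o₂, o₃⟩
          · -- V = M, W ∈ f jf
            have hr₁p := hCgt W hWf hWne r₁ hr₁
            have hs₂Cp := hMgt s₂ hs₂ (hr₁p.trans o₂)
            rcases Finset.mem_union.1 hs₁ with h | h
            · exact hfj.2 Cp hCp W hWf hWne.symm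
                ⟨l jf.castSucc, r₁, s₂, r₂, hpCp, hs₂Cp, hr₁, hr₂, hr₁p, o₂, o₃⟩
            · exact hfj.2 Cp hCp W hWf hWne.symm ⟨s₁, r₁, s₂, r₂, h, hs₂Cp, hr₁, hr₂, o₁, o₂, o₃⟩
          · -- V ∈ π, W = M
            have hs₂p := hBlt V hVp hVne s₂ hs₂
            have hr₁Bp := hMlt r₁ hr₁ (o₂.trans hs₂p)
            rcases Finset.mem_union.1 hr₂ with h | h
            · exact hnc V hVp Bp hBp hVne ⟨s₁, r₁, s₂, r₂, hs₁, hs₂, hr₁Bp, h, o₁, o₂, o₃⟩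
            · exact hnc V hVp Bp hBp hVne
                ⟨s₁, r₁, s₂, l jf.castSucc, hs₁, hs₂, hr₁Bp, hpBp, o₁, o₂, hs₂p⟩
          · exact hnc V hVp W hWp hVW ⟨s₁, r₁, s₂, r₂, hs₁, hs₂, hr₁, hr₂, o₁, o₂, o₃⟩
          · exact absurd ((hCgt W hWf hWne r₁ hr₁).trans (o₂.trans (hBlt V hVp hVne s₂ hs₂)))
              (lt_irrefl _)
          · -- V ∈ f jf, W = M
            have hs₁p := hCgt V hVf hVne s₁ hs₁
            have hs₂p := hCgt V hVf hVne s₂ hs₂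
            have hr₁Cp := hMgt r₁ hr₁ (hs₁p.trans o₁)
            have hr₂Cp := hMgt r₂ hr₂ (hs₂p.trans o₃)
            exact hfj.2 V hVf Cp hCp hVne ⟨s₁, r₁, s₂, r₂, hs₁, hs₂, hr₁Cp, hr₂Cp, o₁, o₂, o₃⟩
          · exact absurd (((hBlt W hWp hWne r₁ hr₁).trans (hCgt V hVf hVne s₁ hs₁)).trans o₁)
              (lt_irrefl _)
          · exact hfj.2 V hVf W hWf hVW ⟨s₁, r₁, s₂, r₂, hs₁, hs₂, hr₁, hr₂, o₁, o₂, o₃⟩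
        have hinner' : ∀ V ∈ π', IsInnerBlock π' V → ∀ k : Fin (m+1), l k ∉ V := by
          intro V hV hIB k hkV
          obtain ⟨W, hW, hWV, s, hsW, t, htW, hst⟩ := hIB
          rcases (hmem' V).1 hV with rfl | ⟨hVp, hVne⟩ | ⟨hVf, hVne⟩
          · have h1 := hst (l jf.castSucc) hpM
            rcases (hmem' W).1 hW with rfl | ⟨hWp, hWne⟩ | ⟨hWf, hWne⟩
            · exact hWV rfl
            · exact absurd h1.2 (not_lt.2 (hBle W hWp t htW).2)
            · exact absurd h1.1 (not_lt.2 (hCge W hWf s hsW).1)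
          · have hkp : l k < l jf.castSucc := hBlt V hVp hVne _ hkV
            rcases (hmem' W).1 hW with rfl | ⟨hWp, hWne⟩ | ⟨hWf, hWne⟩
            · have hsBp : s ∈ Bp := hMlt s hsW ((hst _ hkV).1.trans hkp)
              exact hinner V hVp ⟨Bp, hBp, hVne.symm, s, hsBp, l jf.castSucc, hpBp,
                fun v hv => ⟨(hst v hv).1, hBlt V hVp hVne v hv⟩⟩ k hkV
            · exact hinner V hVp ⟨W, hWp, hWV, s, hsW, t, htW, hst⟩ k hkV
            · exact absurd (hst _ hkV).1
                (not_lt.2 (le_of_lt (hkp.trans (hCgt W hWf hWne s hsW))))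
          · have h1 := hCgt V hVf hVne _ hkV
            have h3 : t ≤ l jf.succ := (Finset.mem_Icc.1 ((hpart'.1 W hW).2 htW)).2
            have h4 : l k < l jf.succ := lt_of_lt_of_le (hst _ hkV).2 h3
            have h5 : k < jf.succ := hmono.lt_iff_lt.1 h4
            have h6 : k ≤ jf.castSucc := by
              rw [Fin.lt_def] at h5
              rw [Fin.le_def]
              simp only [Fin.val_succ, Fin.coe_castSucc] at h5 ⊢
              omega
            exact absurd h1 (not_lt.2 (hmono.monotone h6))
        have hMA : M ∩ Finset.Icc (l jf.castSucc) (l jf.succ) = Cp := by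
          ext x
          simp only [Finset.mem_inter, Finset.mem_Icc]
          constructor
          · rintro ⟨hxM, hpx, hxq⟩
            rcases Finset.mem_union.1 hxM with h | h
            · have hxp : x = l jf.castSucc := le_antisymm (hBle Bp hBp x h).2 hpx
              rw [hxp]
              exact hpCp
            · exact h
          · intro h
            exact ⟨Finset.mem_union_right _ h, (hCge Cp hCp x h).1, (hCge Cp hCp x h).2⟩
        have hres_j : restrictPart π' (Finset.Icc (l jf.castSucc) (l jf.succ)) = f jf := by
          ext D
          rw [mem_restrict]
          constructor
          · rintro ⟨⟨E, hE, rfl⟩, hne⟩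
            rcases (hmem' E).1 hE with rfl | ⟨hEp, hEne⟩ | ⟨hEf, hEne⟩
            · rw [hMA]
              exact hCp
            · exfalso
              obtain ⟨x, hx⟩ := hne
              rw [Finset.mem_inter, Finset.mem_Icc] at hx
              have hxp : x = l jf.castSucc := le_antisymm (hBle E hEp x hx.1).2 hx.2.1
              rw [hxp] at hx
              exact hnotpB E hEp hEne hx.1
            · rwa [Finset.inter_eq_left.2 (hfj.1.1 E hEf).2]
          · intro hD
            by_cases hDCp : D = Cp
            · subst hDCp
              exact ⟨⟨M, hMmem, hMA⟩, ⟨_, hpCp⟩⟩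
            · exact ⟨⟨D, (hmem' D).2 (Or.inr (Or.inr ⟨hD, hDCp⟩)),
                Finset.inter_eq_left.2 (hfj.1.1 D hD).2⟩, (hfj.1.1 D hD).1⟩
        have hres_lt : ∀ i : Fin m, i.succ ≤ jf.castSucc →
            restrictPart π' (Finset.Icc (l i.castSucc) (l i.succ)) =
            restrictPart π (Finset.Icc (l i.castSucc) (l i.succ)) := by
          intro i hij
          have hAle : l i.succ ≤ l jf.castSucc := hmono.monotone hij
          have hAsub : ∀ x ∈ Finset.Icc (l i.castSucc) (l i.succ), x ≤ l jf.castSucc :=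
            fun x hx => le_trans (Finset.mem_Icc.1 hx).2 hAle
          have hCA : ∀ C ∈ f jf, C ≠ Cp → C ∩ Finset.Icc (l i.castSucc) (l i.succ) = ∅ := by
            intro C hC hne
            rw [Finset.eq_empty_iff_forall_notMem]
            rintro x hx
            rw [Finset.mem_inter] at hx
            exact absurd (hAsub x hx.2) (not_le.2 (hCgt C hC hne x hx.1))
          have hMA' : M ∩ Finset.Icc (l i.castSucc) (l i.succ) =
              Bp ∩ Finset.Icc (l i.castSucc) (l i.succ) := by
            ext x
            simp only [Finset.mem_inter]
            constructor
            · rintro ⟨hxM, hxA⟩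
              refine ⟨?_, hxA⟩
              rcases Finset.mem_union.1 hxM with h | h
              · exact h
              · have hxp : x = l jf.castSucc := le_antisymm (hAsub x hxA) (hCge Cp hCp x h).1
                rw [hxp]
                exact hpBp
            · rintro ⟨hxB, hxA⟩
              exact ⟨Finset.mem_union_left _ hxB, hxA⟩
          ext D
          rw [mem_restrict, mem_restrict]
          constructor
          · rintro ⟨⟨E, hE, rfl⟩, hne⟩
            rcases (hmem' E).1 hE with rfl | ⟨hEp, hEne⟩ | ⟨hEf, hEne⟩
            · exact ⟨⟨Bp, hBp, hMA'.symm⟩, hne⟩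
            · exact ⟨⟨E, hEp, rfl⟩, hne⟩
            · rw [hCA E hEf hEne] at hne
              exact absurd hne Finset.not_nonempty_empty
          · rintro ⟨⟨E, hE, rfl⟩, hne⟩
            by_cases hEBp : E = Bp
            · subst hEBp
              exact ⟨⟨M, hMmem, hMA'⟩, hne⟩
            · exact ⟨⟨E, (hmem' E).2 (Or.inr (Or.inl ⟨hE, hEBp⟩)), rfl⟩, hne⟩
        refine ⟨π', hpart', hnc', hinner', ?_⟩
        intro i hi
        by_cases hij : i = jf
        · subst hij
          exact hres_j
        · have h1 : i.succ ≤ jf.castSucc := by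
            rw [Fin.le_def] at hi ⊢
            simp only [Fin.val_succ, Fin.coe_castSucc] at hi ⊢
            have : (i : ℕ) ≠ (jf : ℕ) := fun h => hij (Fin.ext h)
            omega
          rw [hres_lt i h1]
          exact hres i h1
    obtain ⟨π, hpart, hnc, hinner, hres⟩ := main (Fin.last m)
    have hicc : Finset.Icc (l 0) (l (Fin.last m)) = Finset.univ := by
      rw [hlast, h0, Finset.eq_univ_iff_forall]
      intro x
      rw [Finset.mem_Icc]
      refine ⟨Nat.zero_le _, ?_⟩
      show (x : ℕ) ≤ n - 1
      have := x.isLt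
      omega
    rw [hicc] at hpart
    refine ⟨π, ⟨hpart, hnc, ?_⟩, fun i => hres i (Fin.le_last _)⟩
    intro V hV hIB k hk
    cases hχ : χ k with
    | false => rfl
    | true =>
      obtain ⟨i, hi⟩ := (hcirc k).1 hχ
      rw [← hi] at hk
      exact absurd hk (hinner V hV hIB i)

  · -- order iso
    intro π₁ π₂ h₁ h₂
    exact ⟨fun h i => forward π₁ π₂ h _, backward π₁ π₂ h₁ h₂⟩
end

section
/- For every coloring χ : [n] → {•, ∘}, the set INC(χ) of interval-noncrossing partitions, partially ordered by reversed refinement, is a lattice. -/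
open scoped Classical

section Aux

variable {α : Type*} [DecidableEq α]

/-- Common refinement of two partitions. -/
def commonRef (P Q : Finset (Finset α)) : Finset (Finset α) :=
  ((P ×ˢ Q).image (fun p => p.1 ∩ p.2)).filter (·.Nonempty)

lemma mem_commonRef {P Q : Finset (Finset α)} {V : Finset α} :
    V ∈ commonRef P Q ↔ (∃ A ∈ P, ∃ B ∈ Q, V = A ∩ B) ∧ V.Nonempty := by
  constructor
  · intro h
    rw [commonRef, Finset.mem_filter, Finset.mem_image] at h
    obtain ⟨⟨p, hp, hV⟩, hne⟩ := h
    rw [Finset.mem_product] at hp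
    exact ⟨⟨p.1, hp.1, p.2, hp.2, hV.symm⟩, hne⟩
  · rintro ⟨⟨A, hA, B, hB, rfl⟩, hne⟩
    rw [commonRef, Finset.mem_filter, Finset.mem_image]
    exact ⟨⟨(A, B), Finset.mem_product.2 ⟨hA, hB⟩, rfl⟩, hne⟩

lemma blocks_eq {S : Finset α} {P : Finset (Finset α)} (hP : IsPartitionOn S P)
    {A B : Finset α} (hA : A ∈ P) (hB : B ∈ P) {x : α} (hxA : x ∈ A) (hxB : x ∈ B) :
    A = B := by
  have hxS : x ∈ S := (hP.1 A hA).2 hxA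
  obtain ⟨C, _, hu⟩ := hP.2 x hxS
  rw [hu A ⟨hA, hxA⟩, hu B ⟨hB, hxB⟩]

lemma commonRef_isPartitionOn {S : Finset α} {P Q : Finset (Finset α)}
    (hP : IsPartitionOn S P) (hQ : IsPartitionOn S Q) :
    IsPartitionOn S (commonRef P Q) := by
  constructor
  · intro V hV
    obtain ⟨⟨A, hA, B, hB, rfl⟩, hne⟩ := mem_commonRef.1 hV
    exact ⟨hne, (Finset.inter_subset_left).trans (hP.1 A hA).2⟩
  · intro x hx
    obtain ⟨A, ⟨hA, hxA⟩, huA⟩ := hP.2 x hx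
    obtain ⟨B, ⟨hB, hxB⟩, huB⟩ := hQ.2 x hx
    refine ⟨A ∩ B, ⟨mem_commonRef.2 ⟨⟨A, hA, B, hB, rfl⟩, ⟨x, Finset.mem_inter.2 ⟨hxA, hxB⟩⟩⟩,
      Finset.mem_inter.2 ⟨hxA, hxB⟩⟩, ?_⟩
    rintro V ⟨hV, hxV⟩
    obtain ⟨⟨A', hA', B', hB', rfl⟩, -⟩ := mem_commonRef.1 hV
    obtain ⟨hxA', hxB'⟩ := Finset.mem_inter.1 hxV
    rw [huA A' ⟨hA', hxA'⟩, huB B' ⟨hB', hxB'⟩]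

lemma commonRef_noncrossing [LinearOrder α] {P Q : Finset (Finset α)}
    (hP : Noncrossing P) (hQ : Noncrossing Q) : Noncrossing (commonRef P Q) := by
  intro V hV W hW hVW ⟨s₁, r₁, s₂, r₂, h1, h2, h3, h4, h5, h6, h7⟩
  obtain ⟨⟨A, hA, B, hB, rfl⟩, -⟩ := mem_commonRef.1 hV
  obtain ⟨⟨A', hA', B', hB', rfl⟩, -⟩ := mem_commonRef.1 hW
  by_cases hAA : A = A'
  · have hBB : B ≠ B' := fun h => hVW (by rw [hAA, h])
    exact hQ B hB B' hB' hBB ⟨s₁, r₁, s₂, r₂, (Finset.mem_inter.1 h1).2,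
      (Finset.mem_inter.1 h2).2, (Finset.mem_inter.1 h3).2, (Finset.mem_inter.1 h4).2,
      h5, h6, h7⟩
  · exact hP A hA A' hA' hAA ⟨s₁, r₁, s₂, r₂, (Finset.mem_inter.1 h1).1,
      (Finset.mem_inter.1 h2).1, (Finset.mem_inter.1 h3).1, (Finset.mem_inter.1 h4).1,
      h5, h6, h7⟩

/-- If `s < k < t` with `s, t` in a block `A'` and `k` in a different block `A` of a
noncrossing partition, then all of `A` lies strictly between `s` and `t`. -/
lemma block_between [LinearOrder α] {S : Finset α} {P : Finset (Finset α)}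
    (hP : IsPartitionOn S P) (hNC : Noncrossing P) {A A' : Finset α}
    (hA : A ∈ P) (hA' : A' ∈ P) (hne : A ≠ A') {s t k : α}
    (hs : s ∈ A') (ht : t ∈ A') (hk : k ∈ A) (h1 : s < k) (h2 : k < t) :
    ∀ v ∈ A, s < v ∧ v < t := by
  intro v hv
  have hvs : v ≠ s := fun h => hne (blocks_eq hP hA hA' (h ▸ hv) hs)
  have hvt : v ≠ t := fun h => hne (blocks_eq hP hA hA' (h ▸ hv) ht)
  constructor
  · rcases lt_or_gt_of_ne hvs with h | h
    · exact absurd ⟨v, s, k, t, hv, hk, hs, ht, h, h1, h2⟩ (hNC A hA A' hA' hne)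
    · exact h
  · rcases lt_or_gt_of_ne hvt with h | h
    · exact h
    · exact absurd ⟨s, k, t, v, hs, ht, hk, hv, h1, h2, h⟩ (hNC A' hA' A hA (Ne.symm hne))

lemma commonRef_INCOn [LinearOrder α] {S : Finset α} {χ : α → Bool}
    {P Q : Finset (Finset α)} (hP : INCOn S χ P) (hQ : INCOn S χ Q) :
    INCOn S χ (commonRef P Q) := by
  refine ⟨commonRef_isPartitionOn hP.1 hQ.1, commonRef_noncrossing hP.2.1 hQ.2.1, ?_⟩
  rintro V hV ⟨W, hW, hWV, s, hs, t, ht, hbet⟩ k hk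
  obtain ⟨⟨A, hA, B, hB, rfl⟩, -⟩ := mem_commonRef.1 hV
  obtain ⟨⟨A', hA', B', hB', rfl⟩, -⟩ := mem_commonRef.1 hW
  obtain ⟨hkA, hkB⟩ := Finset.mem_inter.1 hk
  obtain ⟨h1, h2⟩ := hbet k hk
  by_cases hAA : A = A'
  · have hBB : B ≠ B' := fun h => hWV (by rw [hAA, h])
    have hbetB := block_between hQ.1 hQ.2.1 hB hB' hBB
      (Finset.mem_inter.1 hs).2 (Finset.mem_inter.1 ht).2 hkB h1 h2
    exact hQ.2.2 B hB ⟨B', hB', Ne.symm hBB, s, (Finset.mem_inter.1 hs).2,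
      t, (Finset.mem_inter.1 ht).2, hbetB⟩ k hkB
  · have hbetA := block_between hP.1 hP.2.1 hA hA' hAA
      (Finset.mem_inter.1 hs).1 (Finset.mem_inter.1 ht).1 hkA h1 h2
    exact hP.2.2 A hA ⟨A', hA', Ne.symm hAA, s, (Finset.mem_inter.1 hs).1,
      t, (Finset.mem_inter.1 ht).1, hbetA⟩ k hkA

lemma commonRef_refines_left {P Q : Finset (Finset α)} : Refines (commonRef P Q) P := by
  intro V hV
  obtain ⟨⟨A, hA, B, hB, rfl⟩, -⟩ := mem_commonRef.1 hV
  exact ⟨A, hA, Finset.inter_subset_left⟩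

lemma commonRef_refines_right {P Q : Finset (Finset α)} : Refines (commonRef P Q) Q := by
  intro V hV
  obtain ⟨⟨A, hA, B, hB, rfl⟩, -⟩ := mem_commonRef.1 hV
  exact ⟨B, hB, Finset.inter_subset_right⟩

lemma refines_commonRef {R P Q : Finset (Finset α)} (hne : ∀ B ∈ R, B.Nonempty)
    (h1 : Refines R P) (h2 : Refines R Q) : Refines R (commonRef P Q) := by
  intro B hB
  obtain ⟨C₁, hC₁, hBC₁⟩ := h1 B hB
  obtain ⟨C₂, hC₂, hBC₂⟩ := h2 B hB
  obtain ⟨x, hx⟩ := hne B hB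
  refine ⟨C₁ ∩ C₂, mem_commonRef.2 ⟨⟨C₁, hC₁, C₂, hC₂, rfl⟩,
    ⟨x, Finset.mem_inter.2 ⟨hBC₁ hx, hBC₂ hx⟩⟩⟩, fun y hy => Finset.mem_inter.2 ⟨hBC₁ hy, hBC₂ hy⟩⟩

lemma refines_trans {P Q R : Finset (Finset α)} (h1 : Refines P Q) (h2 : Refines Q R) :
    Refines P R := by
  intro B hB
  obtain ⟨C, hC, hBC⟩ := h1 B hB
  obtain ⟨D, hD, hCD⟩ := h2 C hC
  exact ⟨D, hD, hBC.trans hCD⟩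

end Aux
/-- Meet of a nonempty family of common upper bounds of `π` and `σ` in INC. -/
lemma family_meet {α : Type*} [DecidableEq α] [LinearOrder α] {S : Finset α} {χ : α → Bool}
    {π σ : Finset (Finset α)} (hπ : IsPartitionOn S π) (hσ : IsPartitionOn S σ)
    {T : Finset (Finset (Finset α))} (hT : T.Nonempty)
    (hall : ∀ τ ∈ T, INCOn S χ τ ∧ Refines π τ ∧ Refines σ τ) :
    ∃ j, INCOn S χ j ∧ Refines π j ∧ Refines σ j ∧ ∀ τ ∈ T, Refines j τ := by
  induction hT using Finset.Nonempty.cons_induction with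
  | singleton a =>
    obtain ⟨h1, h2, h3⟩ := hall a (Finset.mem_singleton_self a)
    exact ⟨a, h1, h2, h3, fun τ hτ => by
      rw [Finset.mem_singleton] at hτ; subst hτ; exact fun B hB => ⟨B, hB, subset_rfl⟩⟩
  | cons a T' ha hT' ih =>
    obtain ⟨j', hj', hπj', hσj', hjall⟩ := ih fun τ hτ => hall τ (Finset.mem_cons_of_mem hτ)
    obtain ⟨ha1, ha2, ha3⟩ := hall a (Finset.mem_cons_self a T')
    refine ⟨commonRef a j', commonRef_INCOn ha1 hj',
      refines_commonRef (fun B hB => (hπ.1 B hB).1) ha2 hπj',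
      refines_commonRef (fun B hB => (hσ.1 B hB).1) ha3 hσj', ?_⟩
    intro τ hτ
    rcases Finset.mem_cons.1 hτ with rfl | hτ
    · exact commonRef_refines_left
    · exact refines_trans commonRef_refines_right (hjall τ hτ)

/-- INC(χ), ordered by reversed refinement, is a lattice: any two
elements have a join and a meet within INC(χ). -/
theorem INC_is_lattice {n : ℕ} (χ : Fin n → Bool) :
    ∀ π σ : Finset (Finset (Fin n)), INCOn Finset.univ χ π → INCOn Finset.univ χ σ →
      (∃ j : Finset (Finset (Fin n)), INCOn Finset.univ χ j ∧
        Refines π j ∧ Refines σ j ∧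
        ∀ τ : Finset (Finset (Fin n)), INCOn Finset.univ χ τ →
          Refines π τ → Refines σ τ → Refines j τ) ∧
      (∃ w : Finset (Finset (Fin n)), INCOn Finset.univ χ w ∧
        Refines w π ∧ Refines w σ ∧
        ∀ τ : Finset (Finset (Fin n)), INCOn Finset.univ χ τ →
          Refines τ π → Refines τ σ → Refines τ w) := by
  intro π σ hπ hσ
  constructor
  · -- join: meet of the set of common upper bounds
    set U : Finset (Finset (Finset (Fin n))) :=
      Finset.univ.filter (fun τ => INCOn Finset.univ χ τ ∧ Refines π τ ∧ Refines σ τ) with hU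
    have hUmem : ∀ τ, τ ∈ U ↔ INCOn Finset.univ χ τ ∧ Refines π τ ∧ Refines σ τ := by
      intro τ; simp [hU]
    have hUne : U.Nonempty := by
      rcases Nat.eq_zero_or_pos n with hn | hn
      · -- n = 0 : everything is empty
        subst hn
        have hempty : ∀ P : Finset (Finset (Fin 0)), IsPartitionOn Finset.univ P → P = ∅ := by
          intro P hP
          refine Finset.eq_empty_of_forall_notMem fun B hB => ?_
          obtain ⟨⟨x, hx⟩, -⟩ := hP.1 B hB
          exact x.elim0
        refine ⟨∅, (hUmem ∅).2 ⟨⟨⟨fun B hB => absurd hB (Finset.notMem_empty B),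
          fun x hx => x.elim0⟩,
          fun V hV => absurd hV (Finset.notMem_empty V),
          fun V hV => absurd hV (Finset.notMem_empty V)⟩, ?_, ?_⟩⟩
        · rw [hempty π hπ.1]; intro B hB; exact absurd hB (Finset.notMem_empty B)
        · rw [hempty σ hσ.1]; intro B hB; exact absurd hB (Finset.notMem_empty B)
      · -- n > 0 : the one-block partition is a common upper bound
        have hne : (Finset.univ : Finset (Fin n)).Nonempty := ⟨⟨0, hn⟩, Finset.mem_univ _⟩
        refine ⟨{Finset.univ}, (hUmem _).2 ⟨⟨⟨?_, ?_⟩, ?_, ?_⟩, ?_, ?_⟩⟩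
        · intro B hB; rw [Finset.mem_singleton] at hB; subst hB
          exact ⟨hne, subset_rfl⟩
        · intro x hx
          exact ⟨Finset.univ, ⟨Finset.mem_singleton_self _, Finset.mem_univ _⟩,
            fun B hB => Finset.mem_singleton.1 hB.1⟩
        · intro V hV W hW hVW
          rw [Finset.mem_singleton] at hV hW
          exact absurd (hV.trans hW.symm) hVW
        · rintro V hV ⟨W, hW, hWV, -⟩
          rw [Finset.mem_singleton] at hV hW
          exact absurd (hW.trans hV.symm) hWV
        · exact fun B hB => ⟨Finset.univ, Finset.mem_singleton_self _, Finset.subset_univ B⟩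
        · exact fun B hB => ⟨Finset.univ, Finset.mem_singleton_self _, Finset.subset_univ B⟩
    obtain ⟨j, hj, hπj, hσj, hjall⟩ :=
      family_meet hπ.1 hσ.1 hUne (fun τ hτ => (hUmem τ).1 hτ)
    exact ⟨j, hj, hπj, hσj, fun τ hτ h1 h2 => hjall τ ((hUmem τ).2 ⟨hτ, h1, h2⟩)⟩
  · -- meet: the common refinement
    refine ⟨commonRef π σ, commonRef_INCOn hπ hσ,
      commonRef_refines_left, commonRef_refines_right, ?_⟩
    intro τ hτ h1 h2
    exact refines_commonRef (fun B hB => (hτ.1.1 B hB).1) h1 h2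
end
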